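/- arXiv:2005.11346 — 3 statements merged into one kernel-verified Lean document; each statement's English description precedes it below -/
import Mathlib

section
/- Let U be a proper nonempty open subset of ℝⁿ with n ≥ 2, and define f(x) = (x₁,...,x_{n-1}, xₙ - p_U(x)/2) with p_U(x) = d_U(x)/(1+d_U(x)). If L is a bounded maximal line segment of U in the direction of the n-th coordinate axis (i.e., L = {(x', t) : t ∈ (a,b)} is a connected component of U ∩ λ_{x'} where λ_{x'} = {(x',t) : t ∈ ℝ}), then f maps L onto L. -/
/-- Let `U ⊆ ℝⁿ` (n ≥ 2) be proper nonempty open, and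
`f(x) = (x₁,…,x_{n-1}, xₙ - p_U(x)/2)`. If `L = {(x',t) : t ∈ (a,b)}` is a bounded maximal
line segment of `U` in the n-th coordinate direction (i.e. `L ⊆ U` and its endpoints lie
outside `U`), then `f` maps `L` onto `L`. -/
theorem stmt_6 (n : ℕ) (hn : 1 ≤ n)
    (U : Set (EuclideanSpace ℝ (Fin (n + 1))))
    (hU : IsOpen U) (hne : U.Nonempty) (hproper : U ≠ Set.univ)
    (p : EuclideanSpace ℝ (Fin (n + 1)) → ℝ)
    (hp : ∀ x, p x = Metric.infDist x Uᶜ / (1 + Metric.infDist x Uᶜ))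
    (f : EuclideanSpace ℝ (Fin (n + 1)) → EuclideanSpace ℝ (Fin (n + 1)))
    (hf : ∀ x i, f x i = if i = Fin.last n then x i - p x / 2 else x i)
    (x' : EuclideanSpace ℝ (Fin (n + 1))) (a b : ℝ) (hab : a < b)
    (L : Set (EuclideanSpace ℝ (Fin (n + 1))))
    (hL : L = {y | (∀ i, i ≠ Fin.last n → y i = x' i) ∧ y (Fin.last n) ∈ Set.Ioo a b})
    (hLU : L ⊆ U)
    (ha : (WithLp.toLp 2 (fun i => if i = Fin.last n then a else x' i) : EuclideanSpace ℝ (Fin (n + 1))) ∉ U)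
    (hb : (WithLp.toLp 2 (fun i => if i = Fin.last n then b else x' i) : EuclideanSpace ℝ (Fin (n + 1))) ∉ U) :
    f '' L = L := by
  classical
  set y : ℝ → EuclideanSpace ℝ (Fin (n + 1)) :=
    fun t => WithLp.toLp 2 (fun i => if i = Fin.last n then t else x' i) with hy
  have hyi : ∀ (t : ℝ) (i : Fin (n + 1)), y t i = if i = Fin.last n then t else x' i :=
    fun _ _ => rfl
  have haU : y a ∈ Uᶜ := ha
  have hbU : y b ∈ Uᶜ := hb
  have hUc : (Uᶜ : Set _).Nonempty := ⟨_, haU⟩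
  have hd0 : ∀ x : EuclideanSpace ℝ (Fin (n + 1)), 0 ≤ Metric.infDist x Uᶜ :=
    fun x => Metric.infDist_nonneg
  have hp0 : ∀ x, 0 ≤ p x := fun x => by
    rw [hp]; exact div_nonneg (hd0 x) (by linarith [hd0 x])
  have hple : ∀ x, p x ≤ Metric.infDist x Uᶜ := fun x => by
    rw [hp]; exact div_le_self (hd0 x) (by linarith [hd0 x])
  -- distance between points on the line
  have hdist : ∀ t s : ℝ, dist (y t) (y s) = |t - s| := by
    intro t s
    rw [EuclideanSpace.dist_eq]
    have h1 : ∀ i : Fin (n + 1),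
        dist (y t i) (y s i) ^ 2 = if i = Fin.last n then |t - s| ^ 2 else 0 := by
      intro i
      by_cases h : i = Fin.last n <;> simp [hyi, h, Real.dist_eq]
    rw [Finset.sum_congr rfl fun i _ => h1 i, Finset.sum_ite_eq' Finset.univ]
    simp [Real.sqrt_sq_eq_abs, abs_abs]
  have hdle : ∀ t : ℝ, Metric.infDist (y t) Uᶜ ≤ |t - a| := fun t =>
    (Metric.infDist_le_dist_of_mem haU).trans_eq (hdist t a)
  have hmemL : ∀ t ∈ Set.Ioo a b, y t ∈ L := by
    intro t ht
    rw [hL]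
    exact ⟨fun i hi => by simp [hyi, hi], by simpa [hyi] using ht⟩
  have hppos : ∀ t ∈ Set.Ioo a b, 0 < p (y t) := by
    intro t ht
    have hytU : y t ∈ U := hLU (hmemL t ht)
    have hpos : 0 < Metric.infDist (y t) Uᶜ := by
      rw [← (hU.isClosed_compl.notMem_iff_infDist_pos hUc)]
      simpa using hytU
    rw [hp]; exact div_pos hpos (by linarith)
  set G : ℝ → ℝ := fun t => t - p (y t) / 2 with hG
  have hfy : ∀ t : ℝ, f (y t) = y (G t) := by
    intro t
    ext i
    rw [hf]
    by_cases h : i = Fin.last n <;> simp [hyi, h, hG]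
  have hGb : G b = b := by
    have h0 : Metric.infDist (y b) Uᶜ = 0 := Metric.infDist_zero_of_mem hbU
    simp [hG, hp, h0]
  have hGmem : ∀ t ∈ Set.Ioo a b, G t ∈ Set.Ioo a b := by
    intro t ht
    have h1 := hple (y t)
    have h2 := hdle t
    rw [abs_of_pos (by linarith [ht.1] : (0 : ℝ) < t - a)] at h2
    have h3 := hppos t ht
    exact ⟨by simp only [hG]; linarith, by simp only [hG]; linarith [ht.2]⟩
  -- continuity of G
  have hycont : Continuous y := by
    have h1 : Continuous fun t : ℝ =>
        (fun i => if i = Fin.last n then t else x' i : ∀ _ : Fin (n + 1), ℝ) :=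
      continuous_pi fun i => by by_cases h : i = Fin.last n <;> simp [h] <;> fun_prop
    exact (PiLp.continuous_toLp 2 fun _ : Fin (n + 1) => ℝ).comp h1
  have hpcont : Continuous p := by
    have hpe : p = fun x => Metric.infDist x Uᶜ / (1 + Metric.infDist x Uᶜ) := funext hp
    rw [hpe]
    exact (Metric.continuous_infDist_pt _).div
      (continuous_const.add (Metric.continuous_infDist_pt _))
      (fun x => by have := hd0 x; intro h; linarith)
  have hGcont : Continuous G := continuous_id.sub ((hpcont.comp hycont).div_const 2)
  -- main proof
  ext z
  constructor
  · rintro ⟨w, hw, rfl⟩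
    rw [hL] at hw
    obtain ⟨hw1, hw2⟩ := hw
    have hwy : w = y (w (Fin.last n)) := by
      ext i
      by_cases h : i = Fin.last n
      · subst h; simp [hyi]
      · simp [hyi, h, hw1 i h]
    rw [hwy, hfy]
    exact hmemL _ (hGmem _ hw2)
  · intro hz
    have hz' := hz
    rw [hL] at hz'
    obtain ⟨hz1, hz2⟩ := hz'
    set s := z (Fin.last n) with hs
    have hzy : z = y s := by
      ext i
      by_cases h : i = Fin.last n
      · subst h; simp [hyi, hs]
      · simp [hyi, h, hz1 i h]
    have hsb : s ≤ b := le_of_lt hz2.2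
    have hGs : G s < s := by
      have := hppos s hz2
      simp only [hG]; linarith
    have hmem : s ∈ Set.Icc (G s) (G b) := ⟨le_of_lt hGs, by rw [hGb]; exact hsb⟩
    obtain ⟨t, htm, hGt⟩ := intermediate_value_Icc hsb hGcont.continuousOn hmem
    have htb : t < b := by
      rcases lt_or_eq_of_le htm.2 with h | h
      · exact h
      · exfalso; rw [h, hGb] at hGt; exact absurd hGt (ne_of_gt hz2.2)
    have hta : a < t := lt_of_lt_of_le hz2.1 htm.1
    exact ⟨y t, hmemL t ⟨hta, htb⟩, by rw [hfy, hGt, ← hzy]⟩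
end

section
/- Let U be a proper nonempty open subset of ℝⁿ and f(x) = (x₁,...,x_{n-1}, xₙ - p_U(x)/2) with p_U(x) = d_U(x)/(1+d_U(x)). If L = {(x',t) : t ∈ ℝ} is a full line contained in U (an unbounded maximal segment in the n-th coordinate direction), then f maps L onto L. -/
/-- Let `U ⊆ ℝⁿ` be proper nonempty open, and
`f(x) = (x₁,…,x_{n-1}, xₙ - p_U(x)/2)`. If `L = {(x',t) : t ∈ ℝ}` is a full line in the
n-th coordinate direction contained in `U`, then `f` maps `L` onto `L`. -/
theorem stmt_7 (n : ℕ)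
    (U : Set (EuclideanSpace ℝ (Fin (n + 1))))
    (hU : IsOpen U) (hne : U.Nonempty) (hproper : U ≠ Set.univ)
    (p : EuclideanSpace ℝ (Fin (n + 1)) → ℝ)
    (hp : ∀ x, p x = Metric.infDist x Uᶜ / (1 + Metric.infDist x Uᶜ))
    (f : EuclideanSpace ℝ (Fin (n + 1)) → EuclideanSpace ℝ (Fin (n + 1)))
    (hf : ∀ x i, f x i = if i = Fin.last n then x i - p x / 2 else x i)
    (x' : EuclideanSpace ℝ (Fin (n + 1)))
    (L : Set (EuclideanSpace ℝ (Fin (n + 1))))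
    (hL : L = {y | ∀ i, i ≠ Fin.last n → y i = x' i})
    (hLU : L ⊆ U) :
    f '' L = L := by
  -- bounds on p
  have hp01 : ∀ x, 0 ≤ p x ∧ p x ≤ 1 := by
    intro x
    have hd : 0 ≤ Metric.infDist x Uᶜ := Metric.infDist_nonneg
    have hpos : (0:ℝ) < 1 + Metric.infDist x Uᶜ := by linarith
    rw [hp x]
    constructor
    · positivity
    · rw [div_le_one hpos]; linarith
  -- continuity of p
  have hpc : Continuous p := by
    have h1 : Continuous fun x : EuclideanSpace ℝ (Fin (n + 1)) => Metric.infDist x Uᶜ :=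
      Metric.continuous_infDist_pt _
    have : Continuous fun x : EuclideanSpace ℝ (Fin (n + 1)) =>
        Metric.infDist x Uᶜ / (1 + Metric.infDist x Uᶜ) := by
      apply h1.div (continuous_const.add h1)
      intro x
      have hd : 0 ≤ Metric.infDist x Uᶜ := Metric.infDist_nonneg
      have hpos' : (0:ℝ) < 1 + Metric.infDist x Uᶜ := by linarith
      exact hpos'.ne'
  -- rewrite p as that function
    convert this using 1
    funext x; exact hp x
  -- the curve t ↦ (x', t)
  set y : ℝ → EuclideanSpace ℝ (Fin (n + 1)) :=
    fun t => WithLp.toLp 2 (Function.update x' (Fin.last n) t) with hy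
  have hyL : ∀ t, y t ∈ L := by
    intro t
    rw [hL]
    intro i hi
    simp [hy, Function.update_of_ne hi]
  have hyc : Continuous y := by
    have : Continuous fun t : ℝ =>
        (Function.update x' (Fin.last n) t : ∀ _ : Fin (n + 1), ℝ) :=
      continuous_const.update (Fin.last n) continuous_id
    exact (PiLp.continuous_toLp 2 _).comp this
  ext z
  constructor
  · rintro ⟨w, hw, rfl⟩
    rw [hL] at hw ⊢
    intro i hi
    rw [hf w i, if_neg hi]
    exact hw i hi
  · intro hz
    -- solve g t = z (last) with g t = t - p (y t) / 2
    set c : ℝ := z (Fin.last n) with hc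
    have hgc : Continuous fun t => t - p (y t) / 2 :=
      continuous_id.sub ((hpc.comp hyc).div_const 2)
    have h1 : (fun t => t - p (y t) / 2) c ≤ c := by
      have := (hp01 (y c)).1; simp; linarith
    have h2 : c ≤ (fun t => t - p (y t) / 2) (c + 1) := by
      have := (hp01 (y (c + 1))).2; simp; linarith
    obtain ⟨t, _, ht⟩ := intermediate_value_Icc (by linarith : c ≤ c + 1)
      (hgc.continuousOn) (Set.mem_Icc.mpr ⟨h1, h2⟩)
    refine ⟨y t, hyL t, ?_⟩
    ext i
    rw [hf (y t) i]
    by_cases hi : i = Fin.last n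
    · subst hi
      have : y t (Fin.last n) = t := by simp [hy]
      rw [if_pos rfl, this]
      exact ht
    · rw [if_neg hi]
      have h3 : y t i = x' i := by simp [hy, Function.update_of_ne hi]
      have h4 : z i = x' i := by rw [hL] at hz; exact hz i hi
      rw [h3, h4]
end

section
/- Let U be a proper nonempty open subset of ℝⁿ (n ≥ 2) and let f(x) = (x₁,...,x_{n-1}, xₙ - p_U(x)/2) with p_U(x) = d_U(x)/(1+d_U(x)). Then f : U → U is a surjection; that is, f maps U onto itself. -/
/-- For a proper nonempty open `U ⊆ ℝⁿ` (n ≥ 2), the map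
`f(x) = (x₁,…,x_{n-1}, xₙ - p_U(x)/2)` maps `U` onto itself. -/
theorem stmt_17 (n : ℕ) (hn : 1 ≤ n)
    (U : Set (EuclideanSpace ℝ (Fin (n + 1))))
    (hU : IsOpen U) (hne : U.Nonempty) (hproper : U ≠ Set.univ)
    (p : EuclideanSpace ℝ (Fin (n + 1)) → ℝ)
    (hp : ∀ x, p x = Metric.infDist x Uᶜ / (1 + Metric.infDist x Uᶜ))
    (f : EuclideanSpace ℝ (Fin (n + 1)) → EuclideanSpace ℝ (Fin (n + 1)))
    (hf : ∀ x i, f x i = if i = Fin.last n then x i - p x / 2 else x i) :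
    f '' U = U := by
  have hUc : (Uᶜ : Set _).Nonempty := by
    rw [Set.nonempty_compl]; exact hproper
  have hd0 : ∀ x, 0 ≤ Metric.infDist x Uᶜ := fun x => Metric.infDist_nonneg
  have hdenom : ∀ x, (0:ℝ) < 1 + Metric.infDist x Uᶜ := fun x => by linarith [hd0 x]
  have hdpos : ∀ x ∈ U, 0 < Metric.infDist x Uᶜ := fun x hx => by
    have := (hU.isClosed_compl.notMem_iff_infDist_pos hUc).1 (by simpa using hx)
    exact this
  have hp_nonneg : ∀ x, 0 ≤ p x := fun x => by
    rw [hp]; exact div_nonneg (hd0 x) (hdenom x).le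
  have hp_lt_one : ∀ x, p x < 1 := fun x => by
    rw [hp, div_lt_one (hdenom x)]; linarith [hd0 x]
  have hp_pos : ∀ x ∈ U, 0 < p x := fun x hx => by
    rw [hp]; exact div_pos (hdpos x hx) (hdenom x)
  have hp_le_d : ∀ x, p x ≤ Metric.infDist x Uᶜ := fun x => by
    rw [hp]
    rw [div_le_iff₀ (hdenom x)]
    nlinarith [hd0 x]
  set e : EuclideanSpace ℝ (Fin (n + 1)) := EuclideanSpace.single (Fin.last n) (1:ℝ) with he
  apply Set.Subset.antisymm
  · -- f '' U ⊆ U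
    rintro _ ⟨x, hx, rfl⟩
    have hdx := hdpos x hx
    have hfx : f x - x = EuclideanSpace.single (Fin.last n) (-(p x / 2)) := by
      ext i
      simp only [PiLp.sub_apply, hf, EuclideanSpace.single_apply]
      by_cases h : i = Fin.last n <;> simp [h] <;> ring
    have hdist : dist (f x) x = p x / 2 := by
      rw [dist_eq_norm, hfx, EuclideanSpace.norm_single, Real.norm_eq_abs,
        abs_of_nonpos (by linarith [hp_nonneg x])]
      ring
    by_contra hfxU
    have : Metric.infDist x Uᶜ ≤ dist x (f x) := Metric.infDist_le_dist_of_mem (by simpa using hfxU)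
    rw [dist_comm, hdist] at this
    have := hp_le_d x
    linarith
  · -- U ⊆ f '' U
    intro y hy
    set F : ℝ → ℝ := fun t => t - p (y + t • e) / 2 with hF
    have hcont_p : Continuous p := by
      have : p = fun x => Metric.infDist x Uᶜ / (1 + Metric.infDist x Uᶜ) := funext hp
      rw [this]
      exact (Metric.continuous_infDist_pt _).div
        (continuous_const.add (Metric.continuous_infDist_pt _)) (fun x => (hdenom x).ne')
    have hcontF : Continuous F :=
      continuous_id.sub ((hcont_p.comp (continuous_const.add
        (continuous_id.smul continuous_const))).div_const 2)
    have hF0 : F 0 < 0 := by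
      have : p (y + (0:ℝ) • e) = p y := by norm_num
      simp only [hF, this]
      linarith [hp_pos y hy]
    have hF1 : 0 < F 1 := by
      simp only [hF]
      linarith [hp_lt_one (y + (1:ℝ) • e)]
    obtain ⟨t, ht01, htF⟩ : ∃ t ∈ Set.Icc (0:ℝ) 1, F t = 0 := by
      have := intermediate_value_Icc (by norm_num : (0:ℝ) ≤ 1) hcontF.continuousOn
      have h0 : (0:ℝ) ∈ Set.Icc (F 0) (F 1) := ⟨hF0.le, hF1.le⟩
      obtain ⟨t, ht, htF⟩ := this h0
      exact ⟨t, ht, htF⟩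
    set x := y + t • e with hx
    have hpt : p x = 2 * t := by
      have : t - p x / 2 = 0 := htF
      linarith
    have htpos : 0 < t := by
      rcases lt_or_eq_of_le ht01.1 with h | h
      · exact h
      · exfalso
        have : p x > 0 := by
          rw [hx, ← h]
          have : y + (0:ℝ) • e = y := by norm_num
          rw [this]; exact hp_pos y hy
        linarith [hpt]
    have hxU : x ∈ U := by
      by_contra hxU
      have : Metric.infDist x Uᶜ = 0 := Metric.infDist_zero_of_mem (by simpa using hxU)
      have hpx : p x = 0 := by rw [hp, this]; norm_num
      linarith [hpt]
    refine ⟨x, hxU, ?_⟩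
    ext i
    simp only [hf]
    by_cases h : i = Fin.last n
    · subst h
      have hxi : x (Fin.last n) = y (Fin.last n) + t := by
        simp [hx, he, EuclideanSpace.single_apply]
      rw [if_pos rfl, hxi, hpt]
      ring
    · rw [if_neg h]
      simp [hx, he, EuclideanSpace.single_apply, h]
end
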